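/- Let k ≥ 1 be an integer and let S be a conical product rule of order k on the reference pyramid (built from two one-dimensional quadratures exact for polynomials of degree ≤ 2k+1 as in the stated hypotheses, with all points ζ_l ∈ [0,1)). Let ũ, ṽ be elements of the H¹-underlying space U^{(0)}_k = Q_k^{k,k,k−1} + span{z^k/(1+z)^k} (functions on K∞). Define f on K̂ ∖ {ζ=1} by f = (ũ·ṽ) ∘ φ⁻¹, where φ⁻¹(ξ,η,ζ) = (ξ/(1−ζ), η/(1−ζ), ζ/(1−ζ)). Then f is Lebesgue integrable on K̂ and S(f) = ∫_{K̂} f. -/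

import Mathlib

open MeasureTheory

noncomputable section

/-- The reference pyramid K̂ ⊂ ℝ³ (coordinates (ξ, η, ζ)). -/
def Khat : Set (ℝ × ℝ × ℝ) :=
  {p | 0 ≤ p.2.2 ∧ p.2.2 ≤ 1 ∧ 0 ≤ p.1 ∧ p.1 ≤ 1 - p.2.2 ∧ 0 ≤ p.2.1 ∧ p.2.1 ≤ 1 - p.2.2}

/-- The k-weighted tensor product polynomial space Q_k^{l,m,n}: the span of
(x,y,z) ↦ x^a y^b z^c / (1+z)^k for 0 ≤ a ≤ l, 0 ≤ b ≤ m, 0 ≤ c ≤ n. -/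
def Qspace (k : ℕ) (l m n : ℤ) : Submodule ℝ ((ℝ × ℝ × ℝ) → ℝ) :=
  Submodule.span ℝ {f | ∃ a b c : ℕ, (a : ℤ) ≤ l ∧ (b : ℤ) ≤ m ∧ (c : ℤ) ≤ n ∧
    f = fun p => p.1 ^ a * p.2.1 ^ b * p.2.2 ^ c / (1 + p.2.2) ^ k}

/-- The inverse of the projective map φ: (ξ,η,ζ) ↦ (ξ/(1−ζ), η/(1−ζ), ζ/(1−ζ)). -/
def phiInv (p : ℝ × ℝ × ℝ) : ℝ × ℝ × ℝ :=
  (p.1 / (1 - p.2.2), p.2.1 / (1 - p.2.2), p.2.2 / (1 - p.2.2))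

/-- The conical product quadrature rule on the reference pyramid. -/
def quadS {N M : ℕ} (xi lam : Fin N → ℝ) (ze mu : Fin M → ℝ) (f : ℝ × ℝ × ℝ → ℝ) : ℝ :=
  ∑ i, ∑ j, ∑ l, lam i * lam j * mu l * f (xi i * (1 - ze l), xi j * (1 - ze l), ze l)

/-! ### Auxiliary definitions and lemmas -/

/-- The pushforward of `x^a y^b z^c / (1+z)^(2k)` under `phiInv`, written with
natural-number exponents (valid for `c ≤ 2k`). -/
def Fmon (k a b c : ℕ) : (ℝ × ℝ × ℝ) → ℝ :=
  fun p => p.1 ^ a * p.2.1 ^ b * (p.2.2 ^ c * (1 - p.2.2) ^ (2*k - c)) / (1 - p.2.2) ^ (a + b)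

lemma Khat_measurable : MeasurableSet Khat := by
  have : Khat = {p : ℝ × ℝ × ℝ | 0 ≤ p.2.2} ∩ {p | p.2.2 ≤ 1} ∩ {p | 0 ≤ p.1} ∩
      {p | p.1 ≤ 1 - p.2.2} ∩ {p | 0 ≤ p.2.1} ∩ {p | p.2.1 ≤ 1 - p.2.2} := by
    ext p; simp only [Khat, Set.mem_setOf_eq, Set.mem_inter_iff]; tauto
  rw [this]
  have m1 : Measurable fun p : ℝ × ℝ × ℝ => p.1 := measurable_fst
  have m2 : Measurable fun p : ℝ × ℝ × ℝ => p.2.1 := measurable_snd.fst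
  have m3 : Measurable fun p : ℝ × ℝ × ℝ => p.2.2 := measurable_snd.snd
  refine (((((measurableSet_le measurable_const m3).inter
    (measurableSet_le m3 measurable_const)).inter
    (measurableSet_le measurable_const m1)).inter
    (measurableSet_le m1 (measurable_const.sub m3))).inter
    (measurableSet_le measurable_const m2)).inter
    (measurableSet_le m2 (measurable_const.sub m3))

lemma Khat_vol : volume Khat ≠ ⊤ := by
  have hsub : Khat ⊆ Set.Icc ((0:ℝ),(0:ℝ),(0:ℝ)) (1,1,1) := by
    rintro ⟨x, y, z⟩ ⟨h1, h2, h3, h4, h5, h6⟩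
    simp only [Set.mem_Icc, Prod.le_def]
    dsimp only at *
    exact ⟨⟨h3, h5, h1⟩, ⟨by linarith, by linarith, h2⟩⟩
  exact ((measure_mono hsub).trans_lt isCompact_Icc.measure_lt_top).ne

lemma Fmon_integrableOn (k a b c : ℕ) : IntegrableOn (Fmon k a b c) Khat volume := by
  refine Measure.integrableOn_of_bounded Khat_vol ?_ (M := 1) ?_
  · refine (Measurable.div ?_ ?_).aestronglyMeasurable <;> fun_prop
  · filter_upwards [ae_restrict_mem Khat_measurable] with p hp
    obtain ⟨h1, h2, h3, h4, h5, h6⟩ := hp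
    have ht0 : (0:ℝ) ≤ 1 - p.2.2 := le_trans h3 h4
    have hF : Fmon k a b c p
        = (p.1 ^ a * p.2.1 ^ b / (1 - p.2.2) ^ (a + b)) * (p.2.2 ^ c * (1 - p.2.2) ^ (2*k - c)) := by
      unfold Fmon; ring
    have hq1 : p.1 ^ a * p.2.1 ^ b ≤ (1 - p.2.2) ^ (a + b) := by
      rw [pow_add]
      exact mul_le_mul (pow_le_pow_left₀ h3 h4 a) (pow_le_pow_left₀ h5 h6 b)
        (pow_nonneg h5 b) (pow_nonneg ht0 a)
    have hnn : 0 ≤ Fmon k a b c p := by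
      rw [hF]
      have := pow_nonneg ht0 (a+b)
      positivity
    rw [Real.norm_eq_abs, abs_of_nonneg hnn, hF]
    refine mul_le_one₀ (div_le_one_of_le₀ hq1 (pow_nonneg ht0 _)) ?_ ?_
    · positivity
    · exact mul_le_one₀ (pow_le_one₀ h1 h2) (pow_nonneg ht0 _) (pow_le_one₀ ht0 (by linarith))

def Dset : Set (ℝ × ℝ) := {q | 0 ≤ q.2 ∧ q.2 ≤ 1 ∧ 0 ≤ q.1 ∧ q.1 ≤ 1 - q.2}

def Dfun (k a b c : ℕ) : ℝ × ℝ → ℝ := fun q =>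
  (1-q.2) ^ (a+1) / ((a:ℝ)+1) *
    (q.1 ^ b * (q.2 ^ c * (1-q.2) ^ (2*k - c) / (1-q.2) ^ (a+b)))

def Efun (k a b c : ℕ) : ℝ → ℝ := fun z =>
  (1-z) ^ (b+1) / ((b:ℝ)+1) *
    ((1-z) ^ (a+1) / ((a:ℝ)+1) * (z ^ c * (1-z) ^ (2*k - c) / (1-z) ^ (a+b)))

lemma ae_ne_one : ∀ᵐ z : ℝ, z ≠ 1 := by
  refine ae_iff.mpr ?_
  have : {z : ℝ | ¬ z ≠ 1} = {1} := by ext z; simp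
  rw [this, Real.volume_singleton]

lemma integral_Fmon (k a b c : ℕ) :
    ∫ p in Khat, Fmon k a b c p
      = 1/((a:ℝ)+1) * (1/((b:ℝ)+1) *
        ∫ z in (0:ℝ)..1, (1-z)^2 * (z ^ c * (1-z) ^ (2*k - c))) := by
  have hG : Integrable (Khat.indicator (Fmon k a b c)) volume :=
    (integrable_indicator_iff Khat_measurable).2 (Fmon_integrableOn k a b c)
  have hG' : Integrable (Khat.indicator (Fmon k a b c))
      ((volume : Measure ℝ).prod (volume : Measure (ℝ × ℝ))) := by
    rwa [← Measure.volume_eq_prod]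
  have step1 : ∀ q : ℝ × ℝ, (∫ x, Khat.indicator (Fmon k a b c) (x, q))
      = Dset.indicator (Dfun k a b c) q := by
    rintro ⟨y, z⟩
    by_cases hcond : (y, z) ∈ Dset
    · obtain ⟨hz0, hz1, hy0, hy1⟩ := hcond
      dsimp only at hz0 hz1 hy0 hy1
      have h0t : (0:ℝ) ≤ 1 - z := by linarith
      have hxg : ∀ x : ℝ, Khat.indicator (Fmon k a b c) (x, (y, z))
          = (Set.Icc (0:ℝ) (1-z)).indicator
            (fun x => x ^ a * (y ^ b * (z ^ c * (1-z) ^ (2*k - c) / (1-z) ^ (a+b)))) x := by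
        intro x
        by_cases hx : x ∈ Set.Icc (0:ℝ) (1-z)
        · rw [Set.indicator_of_mem hx,
            Set.indicator_of_mem (show (x,(y,z)) ∈ Khat from ⟨hz0, hz1, hx.1, hx.2, hy0, hy1⟩)]
          unfold Fmon; dsimp only; ring
        · rw [Set.indicator_of_notMem hx, Set.indicator_of_notMem]
          intro hmem
          exact hx ⟨hmem.2.2.1, hmem.2.2.2.1⟩
      simp only [hxg]
      rw [integral_indicator measurableSet_Icc, integral_mul_const,
        integral_Icc_eq_integral_Ioc, ← intervalIntegral.integral_of_le h0t, integral_pow]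
      rw [Set.indicator_of_mem (show ((y,z) : ℝ × ℝ) ∈ Dset from ⟨hz0, hz1, hy0, hy1⟩)]
      unfold Dfun
      dsimp only
      rw [zero_pow (Nat.succ_ne_zero a)]
      ring
    · have hxg : ∀ x : ℝ, Khat.indicator (Fmon k a b c) (x, (y, z)) = 0 := by
        intro x
        rw [Set.indicator_of_notMem]
        intro hmem
        exact hcond ⟨hmem.1, hmem.2.1, hmem.2.2.2.2⟩
      simp only [hxg, integral_zero]
      rw [Set.indicator_of_notMem hcond]
  have hD : Integrable (Dset.indicator (Dfun k a b c)) volume := by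
    have := hG'.integral_prod_right
    rwa [show (fun q : ℝ × ℝ => ∫ x, Khat.indicator (Fmon k a b c) (x, q))
      = Dset.indicator (Dfun k a b c) from funext step1] at this
  have hD' : Integrable (Dset.indicator (Dfun k a b c))
      ((volume : Measure ℝ).prod (volume : Measure ℝ)) := by
    rwa [← Measure.volume_eq_prod]
  have step3 : ∀ z : ℝ, (∫ y, Dset.indicator (Dfun k a b c) (y, z))
      = (Set.Icc (0:ℝ) 1).indicator (Efun k a b c) z := by
    intro z
    by_cases hz : 0 ≤ z ∧ z ≤ 1
    · obtain ⟨hz0, hz1⟩ := hz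
      have h0t : (0:ℝ) ≤ 1 - z := by linarith
      have hyg : ∀ y : ℝ, Dset.indicator (Dfun k a b c) (y, z)
          = (Set.Icc (0:ℝ) (1-z)).indicator
            (fun y => y ^ b * ((1-z) ^ (a+1) / ((a:ℝ)+1) *
              (z ^ c * (1-z) ^ (2*k - c) / (1-z) ^ (a+b)))) y := by
        intro y
        by_cases hy : y ∈ Set.Icc (0:ℝ) (1-z)
        · rw [Set.indicator_of_mem hy,
            Set.indicator_of_mem (show ((y,z) : ℝ × ℝ) ∈ Dset from ⟨hz0, hz1, hy.1, hy.2⟩)]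
          unfold Dfun; dsimp only; ring
        · rw [Set.indicator_of_notMem hy, Set.indicator_of_notMem]
          intro hmem
          exact hy ⟨hmem.2.2.1, hmem.2.2.2⟩
      simp only [hyg]
      rw [integral_indicator measurableSet_Icc, integral_mul_const,
        integral_Icc_eq_integral_Ioc, ← intervalIntegral.integral_of_le h0t, integral_pow]
      rw [Set.indicator_of_mem (Set.mem_Icc.mpr ⟨hz0, hz1⟩)]
      unfold Efun
      rw [zero_pow (Nat.succ_ne_zero b)]
      ring
    · have hyg : ∀ y : ℝ, Dset.indicator (Dfun k a b c) (y, z) = 0 := by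
        intro y
        rw [Set.indicator_of_notMem]
        intro hmem
        exact hz ⟨hmem.1, hmem.2.1⟩
      simp only [hyg, integral_zero]
      rw [Set.indicator_of_notMem]
      intro hmem
      exact hz ⟨hmem.1, hmem.2⟩
  have key : ∫ p in Khat, Fmon k a b c p
      = ∫ z, (Set.Icc (0:ℝ) 1).indicator (Efun k a b c) z := by
    rw [← integral_indicator Khat_measurable]
    calc ∫ p, Khat.indicator (Fmon k a b c) p
        = ∫ q : ℝ × ℝ, ∫ x, Khat.indicator (Fmon k a b c) (x, q) := by
          rw [Measure.volume_eq_prod]; exact integral_prod_symm _ hG'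
      _ = ∫ q : ℝ × ℝ, Dset.indicator (Dfun k a b c) q := by rw [funext step1]
      _ = ∫ z, ∫ y, Dset.indicator (Dfun k a b c) (y, z) := by
          rw [Measure.volume_eq_prod]; exact integral_prod_symm _ hD'
      _ = _ := by rw [funext step3]
  rw [key, integral_indicator measurableSet_Icc]
  have congrstep : ∫ z in Set.Icc (0:ℝ) 1, Efun k a b c z
      = ∫ z in Set.Icc (0:ℝ) 1,
        1/((a:ℝ)+1) * (1/((b:ℝ)+1) * ((1-z)^2 * (z ^ c * (1-z) ^ (2*k - c)))) := by
    refine setIntegral_congr_ae measurableSet_Icc ?_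
    filter_upwards [ae_ne_one] with z hz _
    have ht : (1:ℝ) - z ≠ 0 := sub_ne_zero.mpr (fun h => hz (by linarith))
    have hexp : (1-z) ^ (a+1) * (1-z) ^ (b+1) = (1-z) ^ (a+b) * (1-z)^2 := by
      rw [← pow_add, ← pow_add]; congr 1; omega
    unfold Efun
    field_simp
    linear_combination (z ^ c * (1-z) ^ (2*k-c) * ((a:ℝ)+1) * ((b:ℝ)+1)) * hexp
  rw [congrstep, integral_const_mul, integral_const_mul,
    integral_Icc_eq_integral_Ioc, ← intervalIntegral.integral_of_le (zero_le_one (α := ℝ))]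

lemma gen_prod_eq (k a1 b1 c1 a2 b2 c2 : ℕ) (hc : c1 + c2 ≤ 2*k) (p : ℝ × ℝ × ℝ)
    (hp : p.2.2 ≠ 1) :
    ((phiInv p).1 ^ a1 * (phiInv p).2.1 ^ b1 * (phiInv p).2.2 ^ c1 / (1 + (phiInv p).2.2) ^ k) *
      ((phiInv p).1 ^ a2 * (phiInv p).2.1 ^ b2 * (phiInv p).2.2 ^ c2 / (1 + (phiInv p).2.2) ^ k)
      = Fmon k (a1+a2) (b1+b2) (c1+c2) p := by
  obtain ⟨x, y, z⟩ := p
  simp only [phiInv, Fmon]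
  dsimp only at hp ⊢
  have ht : (1:ℝ) - z ≠ 0 := sub_ne_zero.mpr (fun h => hp (by linarith))
  have h1t : 1 + z / (1-z) = 1 / (1-z) := by field_simp; ring
  have h2 : ∀ A : ℝ, A / (1/(1-z))^k = A * (1-z)^k := fun A => by
    rw [one_div, inv_pow, div_inv_eq_mul]
  simp only [h1t, h2]
  have hsplit : (1-z)^k * (1-z)^k = (1-z)^(2*k-(c1+c2)) * (1-z)^(c1+c2) := by
    rw [← pow_add, ← pow_add]; congr 1; omega
  simp only [div_pow]
  field_simp
  linear_combination (x^(a1+a2) * y^(b1+b2) * z^(c1+c2) * (1-z)^(a1+a2+(b1+b2))) * hsplit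

lemma Fmon_node (k a b c : ℕ) (u v z : ℝ) (ht : (1:ℝ) - z ≠ 0) :
    Fmon k a b c (u * (1-z), v * (1-z), z) = u^a * v^b * (z^c * (1-z)^(2*k - c)) := by
  unfold Fmon
  dsimp only
  rw [mul_pow, mul_pow, pow_add]
  field_simp

/-! ### Main theorem -/

/-- for ũ, ṽ in the H¹-underlying space
U^{(0)}_k = Q_k^{k,k,k−1} + span{z^k/(1+z)^k}, the function f = (ũ·ṽ) ∘ φ⁻¹ is
integrable on K̂ and the conical product rule of order k ≥ 1 is exact for it. -/
theorem stmt_3 (k : ℕ) (hk : 1 ≤ k) {N M : ℕ} (xi lam : Fin N → ℝ) (ze mu : Fin M → ℝ)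
    (hze : ∀ l, ze l ∈ Set.Ico (0 : ℝ) 1)
    (hxi : ∀ g : Polynomial ℝ, g.natDegree ≤ 2 * k + 1 →
      ∑ i, lam i * g.eval (xi i) = ∫ x in (0:ℝ)..1, g.eval x)
    (hmu : ∀ h : Polynomial ℝ, h.natDegree ≤ 2 * k + 1 →
      ∑ l, mu l * h.eval (ze l) = ∫ z in (0:ℝ)..1, (1 - z) ^ 2 * h.eval z)
    (ut vt : (ℝ × ℝ × ℝ) → ℝ)
    (hut : ut ∈ Qspace k k k ((k : ℤ) - 1) ⊔
      Submodule.span ℝ {(fun p : ℝ × ℝ × ℝ => p.2.2 ^ k / (1 + p.2.2) ^ k)})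
    (hvt : vt ∈ Qspace k k k ((k : ℤ) - 1) ⊔
      Submodule.span ℝ {(fun p : ℝ × ℝ × ℝ => p.2.2 ^ k / (1 + p.2.2) ^ k)})
    (f : (ℝ × ℝ × ℝ) → ℝ)
    (hf : ∀ p : ℝ × ℝ × ℝ, p.2.2 ≠ 1 → f p = ut (phiInv p) * vt (phiInv p)) :
    IntegrableOn f Khat volume ∧ quadS xi lam ze mu f = ∫ p in Khat, f p := by
  classical
  -- a.e. avoidance of ζ = 1
  have ae3 : ∀ᵐ p : ℝ × ℝ × ℝ, p.2.2 ≠ 1 := by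
    refine ae_iff.mpr ?_
    have hset : {p : ℝ × ℝ × ℝ | ¬ p.2.2 ≠ 1}
        = (Set.univ : Set ℝ) ×ˢ ((Set.univ : Set ℝ) ×ˢ ({1} : Set ℝ)) := by
      ext ⟨x, y, z⟩; simp [eq_comm]
    rw [hset, Measure.volume_eq_prod, Measure.prod_prod, Measure.volume_eq_prod,
      Measure.prod_prod, Real.volume_singleton, mul_zero, mul_zero]
  -- specialized quadrature identities
  have hxiP : ∀ a : ℕ, a ≤ 2*k → ∑ i, lam i * xi i ^ a = 1/((a:ℝ)+1) := by
    intro a ha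
    have h := hxi (Polynomial.X ^ a) (by rw [Polynomial.natDegree_X_pow]; omega)
    simp only [Polynomial.eval_pow, Polynomial.eval_X] at h
    rw [h, integral_pow, one_pow, zero_pow (Nat.succ_ne_zero a)]
    push_cast
    ring
  have hmuP : ∀ c : ℕ, c ≤ 2*k → ∑ l, mu l * (ze l ^ c * (1 - ze l) ^ (2*k - c))
      = ∫ z in (0:ℝ)..1, (1-z)^2 * (z ^ c * (1-z) ^ (2*k - c)) := by
    intro c hcc
    have hdeg : (Polynomial.X ^ c * (1 - Polynomial.X : Polynomial ℝ) ^ (2*k - c)).natDegree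
        ≤ 2*k + 1 := by
      refine Polynomial.natDegree_mul_le.trans ?_
      have h2 : ((1 - Polynomial.X : Polynomial ℝ) ^ (2*k - c)).natDegree ≤ 2*k - c := by
        refine Polynomial.natDegree_pow_le.trans ?_
        have h3 : (1 - Polynomial.X : Polynomial ℝ).natDegree ≤ 1 :=
          (Polynomial.natDegree_sub_le _ _).trans (by simp)
        calc (2*k - c) * (1 - Polynomial.X : Polynomial ℝ).natDegree
            ≤ (2*k - c) * 1 := Nat.mul_le_mul_left _ h3
          _ = 2*k - c := mul_one _
      have h1 : (Polynomial.X ^ c : Polynomial ℝ).natDegree = c := Polynomial.natDegree_X_pow c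
      omega
    have h := hmu _ hdeg
    simpa using h
  -- quadS applied to Fmon
  have quadS_Fmon : ∀ a b c : ℕ, quadS xi lam ze mu (Fmon k a b c)
      = (∑ i, lam i * xi i ^ a) * ((∑ j, lam j * xi j ^ b) *
          (∑ l, mu l * (ze l ^ c * (1 - ze l) ^ (2*k - c)))) := by
    intro a b c
    unfold quadS
    calc ∑ i, ∑ j, ∑ l, lam i * lam j * mu l
          * Fmon k a b c (xi i * (1 - ze l), xi j * (1 - ze l), ze l)
        = ∑ i, ∑ j, ∑ l, (lam i * xi i ^ a) * ((lam j * xi j ^ b)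
            * (mu l * (ze l ^ c * (1 - ze l) ^ (2*k - c)))) := by
          refine Finset.sum_congr rfl fun i _ => Finset.sum_congr rfl fun j _ =>
            Finset.sum_congr rfl fun l _ => ?_
          rw [Fmon_node k a b c _ _ _ (sub_ne_zero.mpr (ne_of_gt (by linarith [(hze l).2])))]
          ring
      _ = _ := by
          simp only [← Finset.mul_sum, ← Finset.sum_mul]
  -- the inductive predicate
  have main : ∀ u ∈ Submodule.span ℝ
      {g : (ℝ × ℝ × ℝ) → ℝ | ∃ a b c : ℕ, a ≤ k ∧ b ≤ k ∧ c ≤ k ∧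
        g = fun p => p.1 ^ a * p.2.1 ^ b * p.2.2 ^ c / (1 + p.2.2) ^ k},
      ∀ v ∈ Submodule.span ℝ
      {g : (ℝ × ℝ × ℝ) → ℝ | ∃ a b c : ℕ, a ≤ k ∧ b ≤ k ∧ c ≤ k ∧
        g = fun p => p.1 ^ a * p.2.1 ^ b * p.2.2 ^ c / (1 + p.2.2) ^ k},
      IntegrableOn (fun p => u (phiInv p) * v (phiInv p)) Khat volume ∧
        quadS xi lam ze mu (fun p => u (phiInv p) * v (phiInv p))
          = ∫ p in Khat, u (phiInv p) * v (phiInv p) := by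
    intro u hu v hv
    induction hu, hv using Submodule.span_induction₂ with
    | mem_mem u v hu hv =>
      obtain ⟨a1, b1, c1, ha1, hb1, hc1, rfl⟩ := hu
      obtain ⟨a2, b2, c2, ha2, hb2, hc2, rfl⟩ := hv
      have hc : c1 + c2 ≤ 2*k := by omega
      have hae : (fun p : ℝ × ℝ × ℝ =>
          (fun q : ℝ × ℝ × ℝ => q.1 ^ a1 * q.2.1 ^ b1 * q.2.2 ^ c1 / (1 + q.2.2) ^ k) (phiInv p) *
          (fun q : ℝ × ℝ × ℝ => q.1 ^ a2 * q.2.1 ^ b2 * q.2.2 ^ c2 / (1 + q.2.2) ^ k) (phiInv p))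
          =ᵐ[volume.restrict Khat] Fmon k (a1+a2) (b1+b2) (c1+c2) := by
        refine ae_restrict_of_ae (ae3.mono fun p hp => ?_)
        exact gen_prod_eq k a1 b1 c1 a2 b2 c2 hc p hp
      constructor
      · exact (Fmon_integrableOn k (a1+a2) (b1+b2) (c1+c2)).congr hae.symm
      · have hquad : quadS xi lam ze mu (fun p : ℝ × ℝ × ℝ =>
            (fun q : ℝ × ℝ × ℝ => q.1 ^ a1 * q.2.1 ^ b1 * q.2.2 ^ c1 / (1 + q.2.2) ^ k) (phiInv p) *
            (fun q : ℝ × ℝ × ℝ => q.1 ^ a2 * q.2.1 ^ b2 * q.2.2 ^ c2 / (1 + q.2.2) ^ k) (phiInv p))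
            = quadS xi lam ze mu (Fmon k (a1+a2) (b1+b2) (c1+c2)) := by
          unfold quadS
          refine Finset.sum_congr rfl fun i _ => Finset.sum_congr rfl fun j _ =>
            Finset.sum_congr rfl fun l _ => ?_
          congr 1
          exact gen_prod_eq k a1 b1 c1 a2 b2 c2 hc _ (ne_of_lt (hze l).2)
        rw [hquad, quadS_Fmon, hxiP (a1+a2) (by omega), hxiP (b1+b2) (by omega),
          hmuP (c1+c2) hc, integral_congr_ae hae, integral_Fmon]
    | zero_left v hv =>
      have h0 : (fun p : ℝ × ℝ × ℝ => (0 : (ℝ × ℝ × ℝ) → ℝ) (phiInv p) * v (phiInv p))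
          = fun _ => (0:ℝ) := by funext p; simp
      rw [h0]
      refine ⟨integrableOn_zero, ?_⟩
      simp [quadS]
    | zero_right u hu =>
      have h0 : (fun p : ℝ × ℝ × ℝ => u (phiInv p) * (0 : (ℝ × ℝ × ℝ) → ℝ) (phiInv p))
          = fun _ => (0:ℝ) := by funext p; simp
      rw [h0]
      refine ⟨integrableOn_zero, ?_⟩
      simp [quadS]
    | add_left u₁ u₂ v hu₁ hu₂ hv ih₁ ih₂ =>
      have hfun : (fun p : ℝ × ℝ × ℝ => (u₁ + u₂) (phiInv p) * v (phiInv p))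
          = fun p => u₁ (phiInv p) * v (phiInv p) + u₂ (phiInv p) * v (phiInv p) := by
        funext p; simp [add_mul]
      rw [hfun]
      refine ⟨ih₁.1.add ih₂.1, ?_⟩
      have hq : quadS xi lam ze mu
          (fun p => u₁ (phiInv p) * v (phiInv p) + u₂ (phiInv p) * v (phiInv p))
          = quadS xi lam ze mu (fun p => u₁ (phiInv p) * v (phiInv p))
            + quadS xi lam ze mu (fun p => u₂ (phiInv p) * v (phiInv p)) := by
        simp [quadS, mul_add, Finset.sum_add_distrib]
      rw [hq, ih₁.2, ih₂.2, ← integral_add ih₁.1 ih₂.1]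
    | add_right u v₁ v₂ hu hv₁ hv₂ ih₁ ih₂ =>
      have hfun : (fun p : ℝ × ℝ × ℝ => u (phiInv p) * (v₁ + v₂) (phiInv p))
          = fun p => u (phiInv p) * v₁ (phiInv p) + u (phiInv p) * v₂ (phiInv p) := by
        funext p; simp [mul_add]
      rw [hfun]
      refine ⟨ih₁.1.add ih₂.1, ?_⟩
      have hq : quadS xi lam ze mu
          (fun p => u (phiInv p) * v₁ (phiInv p) + u (phiInv p) * v₂ (phiInv p))
          = quadS xi lam ze mu (fun p => u (phiInv p) * v₁ (phiInv p))
            + quadS xi lam ze mu (fun p => u (phiInv p) * v₂ (phiInv p)) := by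
        simp [quadS, mul_add, Finset.sum_add_distrib]
      rw [hq, ih₁.2, ih₂.2, ← integral_add ih₁.1 ih₂.1]
    | smul_left r u v hu hv ih =>
      have hfun : (fun p : ℝ × ℝ × ℝ => (r • u) (phiInv p) * v (phiInv p))
          = fun p => r * (u (phiInv p) * v (phiInv p)) := by
        funext p; simp [mul_assoc]
      rw [hfun]
      refine ⟨ih.1.const_mul r, ?_⟩
      have hq : quadS xi lam ze mu (fun p => r * (u (phiInv p) * v (phiInv p)))
          = r * quadS xi lam ze mu (fun p => u (phiInv p) * v (phiInv p)) := by
        simp only [quadS, Finset.mul_sum]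
        refine Finset.sum_congr rfl fun i _ => Finset.sum_congr rfl fun j _ =>
          Finset.sum_congr rfl fun l _ => by ring
      rw [hq, ih.2, ← integral_const_mul]
    | smul_right r u v hu hv ih =>
      have hfun : (fun p : ℝ × ℝ × ℝ => u (phiInv p) * (r • v) (phiInv p))
          = fun p => r * (u (phiInv p) * v (phiInv p)) := by
        funext p; simp; ring
      rw [hfun]
      refine ⟨ih.1.const_mul r, ?_⟩
      have hq : quadS xi lam ze mu (fun p => r * (u (phiInv p) * v (phiInv p)))
          = r * quadS xi lam ze mu (fun p => u (phiInv p) * v (phiInv p)) := by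
        simp only [quadS, Finset.mul_sum]
        refine Finset.sum_congr rfl fun i _ => Finset.sum_congr rfl fun j _ =>
          Finset.sum_congr rfl fun l _ => by ring
      rw [hq, ih.2, ← integral_const_mul]
  -- the given spaces are contained in the span of the generators
  have hsup : Qspace k k k ((k : ℤ) - 1) ⊔
      Submodule.span ℝ {(fun p : ℝ × ℝ × ℝ => p.2.2 ^ k / (1 + p.2.2) ^ k)}
      ≤ Submodule.span ℝ
        {g : (ℝ × ℝ × ℝ) → ℝ | ∃ a b c : ℕ, a ≤ k ∧ b ≤ k ∧ c ≤ k ∧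
          g = fun p => p.1 ^ a * p.2.1 ^ b * p.2.2 ^ c / (1 + p.2.2) ^ k} := by
    refine sup_le ?_ ?_
    · refine Submodule.span_le.mpr ?_
      rintro g ⟨a, b, c, ha, hb, hcc, rfl⟩
      refine Submodule.subset_span ⟨a, b, c, by exact_mod_cast ha, by exact_mod_cast hb, ?_, rfl⟩
      have : (c : ℤ) ≤ (k : ℤ) := le_trans hcc (by omega)
      exact_mod_cast this
    · refine Submodule.span_le.mpr ?_
      rintro g hg
      rw [Set.mem_singleton_iff] at hg
      subst hg
      refine Submodule.subset_span ⟨0, 0, k, Nat.zero_le k, Nat.zero_le k, le_refl k, ?_⟩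
      funext p; simp
  have P := main ut (hsup hut) vt (hsup hvt)
  have hFae : (fun p : ℝ × ℝ × ℝ => ut (phiInv p) * vt (phiInv p))
      =ᵐ[volume.restrict Khat] f := by
    refine ae_restrict_of_ae (ae3.mono fun p hp => ?_)
    exact (hf p hp).symm
  constructor
  · exact P.1.congr hFae
  · have h2 : quadS xi lam ze mu f
        = quadS xi lam ze mu (fun p => ut (phiInv p) * vt (phiInv p)) := by
      unfold quadS
      refine Finset.sum_congr rfl fun i _ => Finset.sum_congr rfl fun j _ =>
        Finset.sum_congr rfl fun l _ => ?_
      congr 1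
      exact hf _ (ne_of_lt (hze l).2)
    rw [h2, P.2, integral_congr_ae hFae]
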